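/- arXiv:2403.17655 — 2 statements merged into one kernel-verified Lean document; each statement's English description precedes it below -/
import Mathlib

section
/- For every complex s with Re s > 0, the improper Laplace integral ∫_0^∞ e^{-sx} ψ₁(e^x) dx converges and equals −ζ'(s+1)/(s·ζ(s+1)), where ψ₁(y) = Σ_{p^k ≤ y} (log p)/p^k. -/
open Filter ArithmeticFunction MeasureTheory

/-- `ψ₁(y) = ∑_{n ≤ y} Λ(n)/n = ∑_{p^k ≤ y} (log p)/p^k`. -/
noncomputable def chebyshevPsi1 (y : ℝ) : ℝ :=
  ∑ n ∈ Finset.Icc 1 ⌊y⌋₊, Λ n / n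

namespace Stmt11Aux

/-- The basic interval integrability of the truncated exponential. -/
lemma integrable_piece (s : ℂ) {a T : ℝ} (ha : 0 ≤ a) (haT : a ≤ T) (c : ℂ) :
    IntervalIntegrable (fun x : ℝ => Complex.exp (-s * x) * (if a ≤ x then c else 0))
      volume 0 T := by
  have hA : IntervalIntegrable (fun x : ℝ => Complex.exp (-s * x) * (if a ≤ x then c else 0))
      volume 0 a := by
    rw [intervalIntegrable_iff]
    have hne : ∀ᵐ x : ℝ ∂(volume.restrict (Set.uIoc 0 a)), x ≠ a :=
      ae_restrict_of_ae (by
        simp only [ae_iff, not_not, Set.setOf_eq_eq_singleton]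
        exact measure_singleton a)
    refine (integrable_zero _ _ _).congr ?_
    filter_upwards [ae_restrict_mem measurableSet_uIoc, hne] with x hx hxa
    rw [Set.uIoc_of_le ha] at hx
    have : ¬ a ≤ x := by
      intro h
      exact hxa (le_antisymm hx.2 h)
    simp [this]
  have hB : IntervalIntegrable (fun x : ℝ => Complex.exp (-s * x) * (if a ≤ x then c else 0))
      volume a T := by
    have hg : IntervalIntegrable (fun x : ℝ => Complex.exp (-s * x) * c) volume a T :=
      Continuous.intervalIntegrable (by continuity) a T
    rw [intervalIntegrable_iff] at hg ⊢
    refine hg.congr_fun ?_ measurableSet_uIoc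
    intro x hx
    rw [Set.uIoc_of_le haT] at hx
    simp [hx.1.le]
  exact hA.trans hB

lemma aux_integral (s : ℂ) (hs0 : s ≠ 0) {a T : ℝ} (ha : 0 ≤ a) (haT : a ≤ T) (c : ℂ) :
    (∫ x in (0:ℝ)..T, Complex.exp (-s * x) * (if a ≤ x then c else 0))
      = c * ((Complex.exp (-s * a) - Complex.exp (-s * T)) / s) := by
  have hA : IntervalIntegrable (fun x : ℝ => Complex.exp (-s * x) * (if a ≤ x then c else 0))
      volume 0 a := integrable_piece s ha le_rfl c
  have hB : IntervalIntegrable (fun x : ℝ => Complex.exp (-s * x) * (if a ≤ x then c else 0))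
      volume a T := by
    have hg : IntervalIntegrable (fun x : ℝ => Complex.exp (-s * x) * c) volume a T :=
      Continuous.intervalIntegrable (by continuity) a T
    rw [intervalIntegrable_iff] at hg ⊢
    refine hg.congr_fun ?_ measurableSet_uIoc
    intro x hx
    rw [Set.uIoc_of_le haT] at hx
    simp [hx.1.le]
  have hsplit := intervalIntegral.integral_add_adjacent_intervals hA hB
  have hzero : (∫ x in (0:ℝ)..a, Complex.exp (-s * x) * (if a ≤ x then c else 0)) = 0 := by
    have hne : ∀ᵐ x : ℝ ∂volume, x ≠ a := by
      simp only [ae_iff, not_not, Set.setOf_eq_eq_singleton]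
      exact measure_singleton a
    calc (∫ x in (0:ℝ)..a, Complex.exp (-s * x) * (if a ≤ x then c else 0))
        = ∫ _ in (0:ℝ)..a, (0:ℂ) := by
          apply intervalIntegral.integral_congr_ae
          filter_upwards [hne] with x hxa hx
          rw [Set.uIoc_of_le ha] at hx
          have : ¬ a ≤ x := fun h => hxa (le_antisymm hx.2 h)
          simp [this]
      _ = 0 := intervalIntegral.integral_zero
  have hmain : (∫ x in a..T, Complex.exp (-s * x) * (if a ≤ x then c else 0))
      = c * ((Complex.exp (-s * a) - Complex.exp (-s * T)) / s) := by
    have h1 : (∫ x in a..T, Complex.exp (-s * x) * (if a ≤ x then c else 0))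
        = ∫ x in a..T, Complex.exp (-s * x) * c := by
      apply intervalIntegral.integral_congr
      intro x hx
      rw [Set.uIcc_of_le haT] at hx
      simp [hx.1]
    rw [h1, intervalIntegral.integral_mul_const,
      integral_exp_mul_complex (show -s ≠ 0 by simpa using hs0)]
    have hs0' : (-s) ≠ 0 := by simpa using hs0
    field_simp
    ring
  rw [← hsplit, hzero, zero_add, hmain]

lemma tendsto_poly_exp {b : ℝ} (hb : 0 < b) :
    Tendsto (fun T : ℝ => Real.exp (-b * T) * (T * (1 + T))) atTop (nhds 0) := by
  have hp := (Polynomial.tendsto_div_exp_atTop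
      (Polynomial.C b⁻¹ * Polynomial.X + Polynomial.C (b⁻¹ ^ 2) * Polynomial.X ^ 2)).comp
    (Tendsto.const_mul_atTop hb tendsto_id)
  refine hp.congr fun T => ?_
  simp only [Function.comp, Polynomial.eval_add, Polynomial.eval_mul, Polynomial.eval_C,
    Polynomial.eval_X, Polynomial.eval_pow, id_eq]
  have hb' : b ≠ 0 := hb.ne'
  have he : Real.exp (b * T) ≠ 0 := (Real.exp_pos _).ne'
  rw [neg_mul, Real.exp_neg]
  field_simp

lemma psi1_nonneg (y : ℝ) : 0 ≤ chebyshevPsi1 y :=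
  Finset.sum_nonneg fun n _ => div_nonneg vonMangoldt_nonneg (Nat.cast_nonneg n)

lemma psi1_le {T : ℝ} (hT : 0 ≤ T) : |chebyshevPsi1 (Real.exp T)| ≤ T * (1 + T) := by
  rw [abs_of_nonneg (psi1_nonneg _)]
  set N := ⌊Real.exp T⌋₊ with hN
  have hNle : (N : ℝ) ≤ Real.exp T := Nat.floor_le (Real.exp_pos T).le
  have hN1 : 1 ≤ N := Nat.le_floor (by simpa using Real.one_le_exp hT)
  have hlogle : ∀ n ∈ Finset.Icc 1 N, Real.log n ≤ T := by
    intro n hn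
    rcases Finset.mem_Icc.1 hn with ⟨h1, h2⟩
    have hle : (n : ℝ) ≤ Real.exp T := le_trans (by exact_mod_cast h2) hNle
    rw [Real.log_le_iff_le_exp (by exact_mod_cast Nat.pos_of_ne_zero (by omega) : (0:ℝ) < (n:ℝ))]
    exact hle
  calc chebyshevPsi1 (Real.exp T) ≤ ∑ n ∈ Finset.Icc 1 N, T * (n : ℝ)⁻¹ := by
        refine Finset.sum_le_sum fun n hn => ?_
        have hΛ : Λ n ≤ T := vonMangoldt_le_log.trans (hlogle n hn)
        rw [div_eq_mul_inv]
        exact mul_le_mul_of_nonneg_right hΛ (by positivity)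
    _ = T * ∑ n ∈ Finset.Icc 1 N, (n : ℝ)⁻¹ := by rw [Finset.mul_sum]
    _ ≤ T * (1 + Real.log N) := by
        refine mul_le_mul_of_nonneg_left ?_ hT
        have := harmonic_le_one_add_log N
        have heq : ((harmonic N : ℚ) : ℝ) = ∑ n ∈ Finset.Icc 1 N, (n : ℝ)⁻¹ := by
          rw [harmonic_eq_sum_Icc]; push_cast; rfl
        linarith [heq ▸ this]
    _ ≤ T * (1 + T) := by
        refine mul_le_mul_of_nonneg_left ?_ hT
        have : Real.log N ≤ T := by
          rw [Real.log_le_iff_le_exp (by exact_mod_cast Nat.pos_of_ne_zero (by omega) : (0:ℝ) < (N:ℝ))]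
          exact hNle
        linarith

end Stmt11Aux

open Stmt11Aux in
theorem stmt11 (s : ℂ) (hs : 0 < s.re) :
    Tendsto (fun T : ℝ =>
        ∫ x in (0:ℝ)..T, Complex.exp (-s * x) * (chebyshevPsi1 (Real.exp x) : ℂ))
      atTop
      (nhds (-(deriv riemannZeta (s + 1)) / (s * riemannZeta (s + 1)))) := by
  have hs0 : s ≠ 0 := by
    intro h; rw [h] at hs; simp at hs
  have hs1 : 1 < (s + 1).re := by
    simp only [Complex.add_re, Complex.one_re]; linarith
  have hsum : LSeriesSummable (fun n => ((Λ n : ℝ) : ℂ)) (s + 1) :=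
    ArithmeticFunction.LSeriesSummable_vonMangoldt hs1
  set L : ℂ := LSeries (fun n => ((Λ n : ℝ) : ℂ)) (s + 1) with hLdef
  set F : ℝ → ℂ := fun T =>
    (1 / s) * ∑ n ∈ Finset.Icc 1 ⌊Real.exp T⌋₊, LSeries.term (fun n => ((Λ n : ℝ) : ℂ)) (s + 1) n
      - Complex.exp (-s * T) / s * (chebyshevPsi1 (Real.exp T) : ℂ) with hFdef
  -- Step 1: the integral equals `F T` for `T ≥ 0`.
  have heq : ∀ᶠ T in atTop,
      (∫ x in (0:ℝ)..T, Complex.exp (-s * x) * (chebyshevPsi1 (Real.exp x) : ℂ)) = F T := by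
    filter_upwards [eventually_ge_atTop (0:ℝ)] with T hT
    set N := ⌊Real.exp T⌋₊ with hN
    have hNle : (N : ℝ) ≤ Real.exp T := Nat.floor_le (Real.exp_pos T).le
    have hlogle : ∀ n ∈ Finset.Icc 1 N, Real.log n ≤ T ∧ 0 ≤ Real.log n := by
      intro n hn
      rcases Finset.mem_Icc.1 hn with ⟨h1, h2⟩
      have h1' : (1:ℝ) ≤ (n:ℝ) := by exact_mod_cast h1
      constructor
      · rw [Real.log_le_iff_le_exp (by exact_mod_cast Nat.pos_of_ne_zero (by omega) : (0:ℝ) < (n:ℝ))]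
        exact le_trans (by exact_mod_cast h2) hNle
      · exact Real.log_nonneg h1'
    have hpt : Set.EqOn
        (fun x : ℝ => Complex.exp (-s * x) * (chebyshevPsi1 (Real.exp x) : ℂ))
        (fun x : ℝ => ∑ n ∈ Finset.Icc 1 N,
          Complex.exp (-s * x) * (if Real.log n ≤ x then (((Λ n : ℝ) / n : ℝ) : ℂ) else 0))
        (Set.uIcc 0 T) := by
      intro x hx
      rw [Set.uIcc_of_le hT] at hx
      simp only
      rw [← Finset.mul_sum]
      congr 1
      have hsub : Finset.Icc 1 ⌊Real.exp x⌋₊ ⊆ Finset.Icc 1 N :=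
        Finset.Icc_subset_Icc le_rfl (Nat.floor_le_floor (Real.exp_le_exp.2 hx.2))
      have step1 : ((chebyshevPsi1 (Real.exp x) : ℝ) : ℂ)
          = ∑ n ∈ Finset.Icc 1 ⌊Real.exp x⌋₊, (((Λ n : ℝ) / n : ℝ) : ℂ) := by
        rw [chebyshevPsi1]; push_cast; rfl
      rw [step1]
      refine (Finset.sum_congr rfl fun n hn => ?_).trans
        (Finset.sum_subset hsub fun n hn hnotin => ?_)
      · rcases Finset.mem_Icc.1 hn with ⟨hn1, hn2⟩
        have : Real.log n ≤ x := by
          rw [Real.log_le_iff_le_exp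
            (by exact_mod_cast Nat.pos_of_ne_zero (by omega) : (0:ℝ) < (n:ℝ))]
          exact le_trans (by exact_mod_cast hn2) (Nat.floor_le (Real.exp_pos x).le)
        rw [if_pos this]
      · rcases Finset.mem_Icc.1 hn with ⟨hn1, _⟩
        have hgt : ⌊Real.exp x⌋₊ < n := by
          by_contra hcon
          push_neg at hcon
          exact hnotin (Finset.mem_Icc.2 ⟨hn1, hcon⟩)
        have hlt : Real.exp x < n := (Nat.floor_lt (Real.exp_pos x).le).1 hgt
        have : x < Real.log n := by
          have := Real.log_lt_log (Real.exp_pos x) hlt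
          rwa [Real.log_exp] at this
        rw [if_neg (not_le.2 this)]
    rw [intervalIntegral.integral_congr hpt]
    rw [intervalIntegral.integral_finset_sum (fun n hn =>
      integrable_piece s (hlogle n hn).2 (hlogle n hn).1 _)]
    have hval : ∀ n ∈ Finset.Icc 1 N,
        (∫ x in (0:ℝ)..T,
            Complex.exp (-s * x) * (if Real.log n ≤ x then (((Λ n : ℝ) / n : ℝ) : ℂ) else 0))
          = (1 / s) * LSeries.term (fun n => ((Λ n : ℝ) : ℂ)) (s + 1) n
            - Complex.exp (-s * T) / s * (((Λ n : ℝ) / n : ℝ) : ℂ) := by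
      intro n hn
      rw [aux_integral s hs0 (hlogle n hn).2 (hlogle n hn).1]
      rcases Finset.mem_Icc.1 hn with ⟨hn1, _⟩
      have hn0 : n ≠ 0 := by omega
      have hnc : (n : ℂ) ≠ 0 := Nat.cast_ne_zero.2 hn0
      rw [LSeries.term_of_ne_zero hn0]
      have hexp : Complex.exp (-s * (Real.log n : ℂ)) = (n : ℂ) ^ (-s) := by
        rw [Complex.cpow_def_of_ne_zero hnc, ← Complex.natCast_log, mul_comm]
      rw [hexp, Complex.cpow_neg]
      have hpow : (n : ℂ) ^ (s + 1) = (n : ℂ) ^ s * n := by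
        rw [Complex.cpow_add _ _ hnc, Complex.cpow_one]
      rw [hpow]
      have hps : (n : ℂ) ^ s ≠ 0 := by
        simp only [ne_eq, Complex.cpow_eq_zero_iff, not_and_or, not_not]
        exact Or.inl hnc
      push_cast
      field_simp
    rw [Finset.sum_congr rfl hval, Finset.sum_sub_distrib, ← Finset.mul_sum, ← Finset.mul_sum]
    have hcast : ((chebyshevPsi1 (Real.exp T) : ℝ) : ℂ)
        = ∑ n ∈ Finset.Icc 1 N, (((Λ n : ℝ) / n : ℝ) : ℂ) := by
      rw [chebyshevPsi1]; push_cast; rfl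
    rw [hFdef]
    simp only [hN]
    rw [hcast]
  -- Step 2: `F` tends to the limit.
  have h1 : Tendsto (fun T : ℝ =>
      ∑ n ∈ Finset.Icc 1 ⌊Real.exp T⌋₊, LSeries.term (fun n => ((Λ n : ℝ) : ℂ)) (s + 1) n)
      atTop (nhds L) := by
    have hrange : ∀ N : ℕ, ∑ n ∈ Finset.range (N + 1),
        LSeries.term (fun n => ((Λ n : ℝ) : ℂ)) (s + 1) n
        = ∑ n ∈ Finset.Icc 1 N, LSeries.term (fun n => ((Λ n : ℝ) : ℂ)) (s + 1) n := by
      intro N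
      rw [Finset.sum_range_succ', LSeries.term_zero, add_zero,
        ← Finset.Ico_add_one_right_eq_Icc, Finset.sum_Ico_eq_sum_range]
      simp [add_comm]
    have h0 : Tendsto (fun N : ℕ =>
        ∑ n ∈ Finset.range N, LSeries.term (fun n => ((Λ n : ℝ) : ℂ)) (s + 1) n)
        atTop (nhds L) := hsum.hasSum.tendsto_sum_nat
    have hcomp : Tendsto (fun T : ℝ => ⌊Real.exp T⌋₊ + 1) atTop atTop :=
      (tendsto_add_atTop_nat 1).comp (tendsto_nat_floor_atTop.comp Real.tendsto_exp_atTop)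
    have := h0.comp hcomp
    simpa only [Function.comp_def, hrange] using this
  have h2 : Tendsto (fun T : ℝ =>
      Complex.exp (-s * T) / s * (chebyshevPsi1 (Real.exp T) : ℂ)) atTop (nhds 0) := by
    have hg : Tendsto (fun T : ℝ => (1 / ‖s‖) * (Real.exp (-s.re * T) * (T * (1 + T))))
        atTop (nhds 0) := by
      have := (tendsto_poly_exp hs).const_mul (1 / ‖s‖)
      simpa using this
    refine squeeze_zero_norm' ?_ hg
    filter_upwards [eventually_ge_atTop (0:ℝ)] with T hT
    have hnorm : ‖Complex.exp (-s * T) / s * (chebyshevPsi1 (Real.exp T) : ℂ)‖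
        = Real.exp (-s.re * T) / ‖s‖ * |chebyshevPsi1 (Real.exp T)| := by
      rw [norm_mul, norm_div, Complex.norm_real, Complex.norm_exp]
      congr 3
      simp [Complex.mul_re]
    rw [hnorm]
    have hb := psi1_le hT
    have h1' : Real.exp (-s.re * T) / ‖s‖ * |chebyshevPsi1 (Real.exp T)|
        ≤ Real.exp (-s.re * T) / ‖s‖ * (T * (1 + T)) :=
      mul_le_mul_of_nonneg_left hb (by positivity)
    calc Real.exp (-s.re * T) / ‖s‖ * |chebyshevPsi1 (Real.exp T)|
        ≤ Real.exp (-s.re * T) / ‖s‖ * (T * (1 + T)) := h1'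
      _ = (1 / ‖s‖) * (Real.exp (-s.re * T) * (T * (1 + T))) := by ring
  have hfinal : Tendsto F atTop (nhds ((1 / s) * L - 0)) :=
    (tendsto_const_nhds.mul h1).sub h2
  have hLval : (1 / s) * L - 0
      = -(deriv riemannZeta (s + 1)) / (s * riemannZeta (s + 1)) := by
    rw [sub_zero, hLdef]
    have : LSeries (fun n => ((Λ n : ℝ) : ℂ)) (s + 1)
        = -deriv riemannZeta (s + 1) / riemannZeta (s + 1) :=
      ArithmeticFunction.LSeries_vonMangoldt_eq_deriv_riemannZeta_div hs1
    rw [this, div_mul_div_comm, one_mul]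
  rw [hLval] at hfinal
  exact Tendsto.congr' (heq.mono fun _ h => h.symm) hfinal
end

section
/- The function S(x) = ψ₁(e^x) − x + γ satisfies: S(x) + x is non-decreasing on [0,∞), and the improper Laplace integral L{S;s} = ∫_0^∞ e^{-sx} S(x) dx converges for Re s > 0 with L{S;s} = −ζ'(s+1)/(s ζ(s+1)) − 1/s² + γ/s. -/
open Filter ArithmeticFunction MeasureTheory

/-- `S(x) = ψ₁(eˣ) − x + γ`. -/
noncomputable def Sfun (x : ℝ) : ℝ :=
  chebyshevPsi1 (Real.exp x) - x + Real.eulerMascheroniConstant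

lemma psi1_mono : Monotone chebyshevPsi1 := by
  intro a b hab
  apply Finset.sum_le_sum_of_subset_of_nonneg
  · exact Finset.Icc_subset_Icc le_rfl (Nat.floor_le_floor hab)
  · intro n _ _
    exact div_nonneg vonMangoldt_nonneg (Nat.cast_nonneg n)

lemma mono_part : MonotoneOn (fun x : ℝ => Sfun x + x) (Set.Ici 0) := by
  intro a _ b _ hab
  simp only [Sfun]
  have := psi1_mono (Real.exp_le_exp.mpr hab)
  linarith

lemma vonMangoldt_div_summable {sg : ℝ} (hsg : 0 < sg) :
    Summable (fun n : ℕ => 2 * (Λ n / (n : ℝ) ^ (1 + sg))) := by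
  apply Summable.mul_left
  have hsum : Summable (fun n : ℕ => (2 / sg) * (1 / (n : ℝ) ^ (1 + sg / 2))) := by
    apply Summable.mul_left
    exact (Real.summable_one_div_nat_rpow).mpr (by linarith)
  apply Summable.of_nonneg_of_le
    (fun n => div_nonneg vonMangoldt_nonneg (Real.rpow_nonneg (Nat.cast_nonneg n) _)) _ hsum
  intro n
  rcases Nat.eq_zero_or_pos n with rfl | hn
  · simp [vonMangoldt_nonneg]
    positivity
  have hn1 : (1 : ℝ) ≤ (n : ℝ) := by exact_mod_cast hn
  have hlog : Λ n ≤ (n : ℝ) ^ (sg/2) / (sg/2) :=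
    le_trans vonMangoldt_le_log (Real.log_le_rpow_div (Nat.cast_nonneg n) (by linarith))
  have hnp : (0:ℝ) < (n : ℝ) ^ (1 + sg) := by positivity
  rw [div_le_iff₀ hnp] at *
  calc Λ n ≤ (n : ℝ) ^ (sg/2) / (sg/2) := hlog
    _ = (2/sg) * (n:ℝ) ^ (sg/2) := by field_simp
    _ ≤ (2/sg) * (1 / (n:ℝ) ^ (1 + sg/2)) * (n:ℝ) ^ (1 + sg) := by
        rw [mul_assoc]
        apply mul_le_mul_of_nonneg_left _ (by positivity)
        rw [one_div, ← Real.rpow_neg (Nat.cast_nonneg n), ← Real.rpow_add (by linarith : (0:ℝ) < n)]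
        apply Real.rpow_le_rpow_of_exponent_le hn1
        ring_nf
        exact le_refl _

-- decay lemmas
lemma cexp_decay {s : ℂ} (hs : 0 < s.re) :
    Tendsto (fun T : ℝ => Complex.exp (-s * T)) atTop (nhds 0) := by
  rw [tendsto_zero_iff_norm_tendsto_zero]
  have : (fun T : ℝ => ‖Complex.exp (-s * T)‖) = fun T : ℝ => Real.exp (-(s.re * T)) := by
    ext T
    rw [Complex.norm_exp]
    congr 1
    simp [Complex.neg_re, Complex.mul_re]
  rw [this]
  exact Real.tendsto_exp_neg_atTop_nhds_zero.comp (Tendsto.const_mul_atTop hs tendsto_id)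

lemma cexp_mul_decay {s : ℂ} (hs : 0 < s.re) :
    Tendsto (fun T : ℝ => (T : ℂ) * Complex.exp (-s * T)) atTop (nhds 0) := by
  have hg : Tendsto (fun T : ℝ => T * Real.exp (-(s.re * T))) atTop (nhds 0) := by
    have h := (Real.tendsto_pow_mul_exp_neg_atTop_nhds_zero 1).comp
      (Tendsto.const_mul_atTop hs tendsto_id)
    have h2 := h.const_mul (1 / s.re)
    rw [mul_zero] at h2
    apply h2.congr
    intro T
    simp only [Function.comp_apply, pow_one, id_eq]
    field_simp
  apply squeeze_zero_norm' _ hg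
  filter_upwards [eventually_ge_atTop (0:ℝ)] with T hT
  rw [norm_mul, Complex.norm_exp]
  have h1 : ‖(T:ℂ)‖ = T := by
    rw [Complex.norm_real, Real.norm_eq_abs, abs_of_nonneg hT]
  rw [h1]
  apply le_of_eq
  congr 1
  simp [Complex.neg_re, Complex.mul_re]

-- indicator integral step
lemma ind_integral {g : ℝ → ℂ} (hg : Continuous g) {c T : ℝ} (hc0 : 0 ≤ c) (hcT : c ≤ T) :
    ∫ x in (0:ℝ)..T, Set.indicator (Set.Ici c) g x = ∫ x in c..T, g x := by
  have hae : ∀ᵐ x : ℝ, x ≠ c := by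
    rw [MeasureTheory.ae_iff]
    simpa using measure_singleton c
  have key : ∀ x : ℝ, x ≠ c →
      Set.indicator (Set.Ici c) g x = g x - Set.indicator {y : ℝ | y ≤ c} g x := by
    intro x hx
    rcases lt_or_gt_of_ne hx with h | h
    · simp [Set.indicator_apply, Set.mem_Ici, not_le.mpr h, le_of_lt h]
    · simp [Set.indicator_apply, Set.mem_Ici, le_of_lt h, not_le.mpr h]
  have hint1 : IntervalIntegrable g volume 0 T := hg.intervalIntegrable 0 T
  have hint2 : IntervalIntegrable (fun x => Set.indicator {y : ℝ | y ≤ c} g x) volume 0 T := by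
    have : {y : ℝ | y ≤ c} = Set.Iic c := rfl
    rw [this]
    constructor
    · exact ((hg.integrableOn_Ioc)).indicator measurableSet_Iic
    · exact ((hg.integrableOn_Ioc)).indicator measurableSet_Iic
  calc ∫ x in (0:ℝ)..T, Set.indicator (Set.Ici c) g x
      = ∫ x in (0:ℝ)..T, (g x - Set.indicator {y : ℝ | y ≤ c} g x) := by
        apply intervalIntegral.integral_congr_ae
        filter_upwards [hae] with x hx _ using key x hx
    _ = (∫ x in (0:ℝ)..T, g x) - ∫ x in (0:ℝ)..T, Set.indicator {y : ℝ | y ≤ c} g x :=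
        intervalIntegral.integral_sub hint1 hint2
    _ = (∫ x in (0:ℝ)..T, g x) - ∫ x in (0:ℝ)..c, g x := by
        rw [intervalIntegral.integral_indicator (Set.mem_Icc.mpr ⟨hc0, hcT⟩)]
    _ = ∫ x in c..T, g x :=
        intervalIntegral.integral_interval_sub_left hint1 (hg.intervalIntegrable 0 c)

lemma pointwise_eq (T : ℝ) (x : ℝ) (hx : x ∈ Set.Icc 0 T) :
    ((chebyshevPsi1 (Real.exp x) : ℝ) : ℂ) =
      ∑ n ∈ Finset.Icc 1 ⌊Real.exp T⌋₊,
        Set.indicator (Set.Ici (Real.log n)) (fun _ => ((Λ n / n : ℝ) : ℂ)) x := by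
  have hfil : (Finset.Icc 1 ⌊Real.exp T⌋₊).filter (fun n : ℕ => Real.log (n:ℝ) ≤ x)
      = (Finset.Icc 1 ⌊Real.exp x⌋₊ : Finset ℕ) := by
    ext m
    simp only [Finset.mem_filter, Finset.mem_Icc]
    constructor
    · rintro ⟨⟨h1, _⟩, hlog⟩
      refine ⟨h1, Nat.le_floor ?_⟩
      have : (0:ℝ) < m := by exact_mod_cast h1
      exact (Real.log_le_iff_le_exp this).mp hlog
    · rintro ⟨h1, h2⟩
      have hm : (0:ℝ) < m := by exact_mod_cast h1
      have hmx : (m : ℝ) ≤ Real.exp x :=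
        le_trans (Nat.cast_le.mpr h2) (Nat.floor_le (Real.exp_nonneg x))
      refine ⟨⟨h1, Nat.le_floor (hmx.trans (Real.exp_le_exp.mpr hx.2))⟩,
        (Real.log_le_iff_le_exp hm).mpr hmx⟩
  have : ∑ n ∈ Finset.Icc 1 ⌊Real.exp T⌋₊,
        Set.indicator (Set.Ici (Real.log n)) (fun _ => ((Λ n / n : ℝ) : ℂ)) x
      = ∑ n ∈ Finset.Icc 1 ⌊Real.exp x⌋₊, ((Λ n / n : ℝ) : ℂ) := by
    rw [← hfil, Finset.sum_filter]
    apply Finset.sum_congr rfl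
    intro n _
    by_cases h : Real.log n ≤ x
    · simp [Set.indicator_apply, Set.mem_Ici, h]
    · simp [Set.indicator_apply, Set.mem_Ici, h]
  rw [this, chebyshevPsi1]
  push_cast
  rfl

lemma psi1_intervalIntegrable (s : ℂ) {T : ℝ} (hT : 0 ≤ T) :
    IntervalIntegrable (fun x : ℝ => Complex.exp (-s * x) * (chebyshevPsi1 (Real.exp x) : ℂ))
      volume 0 T := by
  have hcont : ∀ K : ℂ, Continuous (fun x : ℝ => Complex.exp (-s * x) * K) := by
    intro K
    exact (Complex.continuous_exp.comp (by continuity)).mul continuous_const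
  rw [intervalIntegrable_iff_integrableOn_Ioc_of_le hT]
  apply MeasureTheory.IntegrableOn.congr_fun
    (f := fun x : ℝ => ∑ n ∈ Finset.Icc 1 ⌊Real.exp T⌋₊,
      Set.indicator (Set.Ici (Real.log n)) (fun y => Complex.exp (-s * y) * ((Λ n / n : ℝ) : ℂ)) x)
  · apply MeasureTheory.integrable_finset_sum
    intro n _
    exact ((hcont _).integrableOn_Ioc).indicator measurableSet_Ici
  · intro x hx
    have hx' : x ∈ Set.Icc 0 T := Set.Ioc_subset_Icc_self hx
    show _ = Complex.exp (-s * x) * ((chebyshevPsi1 (Real.exp x) : ℝ) : ℂ)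
    rw [pointwise_eq T x hx', Finset.mul_sum]
    apply Finset.sum_congr rfl
    intro n _
    by_cases h : x ∈ Set.Ici (Real.log n)
    · simp [Set.indicator_of_mem h]
    · simp [Set.indicator_of_notMem h]
  · exact measurableSet_Ioc

lemma psi1_integral (s : ℂ) (hs : s ≠ 0) (T : ℝ) (hT : 0 ≤ T) :
    (∫ x in (0:ℝ)..T, Complex.exp (-s * x) * (chebyshevPsi1 (Real.exp x) : ℂ))
    = (∑ n ∈ Finset.Icc 1 ⌊Real.exp T⌋₊,
        ((Λ n / n : ℝ) : ℂ) * (Complex.exp (-s * Real.log n) - Complex.exp (-s * T))) / s := by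
  have hns : -s ≠ 0 := neg_ne_zero.mpr hs
  have hcont : ∀ K : ℂ, Continuous (fun x : ℝ => Complex.exp (-s * x) * K) := by
    intro K
    exact (Complex.continuous_exp.comp (by continuity)).mul continuous_const
  have step1 : (∫ x in (0:ℝ)..T, Complex.exp (-s * x) * (chebyshevPsi1 (Real.exp x) : ℂ))
      = ∑ n ∈ Finset.Icc 1 ⌊Real.exp T⌋₊, ∫ x in (0:ℝ)..T,
          Set.indicator (Set.Ici (Real.log n))
            (fun y => Complex.exp (-s * y) * ((Λ n / n : ℝ) : ℂ)) x := by
    rw [← intervalIntegral.integral_finset_sum]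
    · apply intervalIntegral.integral_congr
      intro x hx
      rw [Set.uIcc_of_le hT] at hx
      show Complex.exp (-s * x) * ((chebyshevPsi1 (Real.exp x) : ℝ) : ℂ) = _
      rw [pointwise_eq T x hx, Finset.mul_sum]
      apply Finset.sum_congr rfl
      intro n _
      by_cases h : x ∈ Set.Ici (Real.log n)
      · simp [Set.indicator_of_mem h]
      · simp [Set.indicator_of_notMem h]
    · intro n _
      constructor
      · exact ((hcont _).integrableOn_Ioc).indicator measurableSet_Ici
      · exact ((hcont _).integrableOn_Ioc).indicator measurableSet_Ici
  rw [step1, Finset.sum_div]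
  apply Finset.sum_congr rfl
  intro n hn
  rw [Finset.mem_Icc] at hn
  have hn1 : (1:ℝ) ≤ (n:ℝ) := by exact_mod_cast hn.1
  have hlog0 : 0 ≤ Real.log n := Real.log_nonneg hn1
  have hnT : (n : ℝ) ≤ Real.exp T :=
    le_trans (Nat.cast_le.mpr hn.2) (Nat.floor_le (Real.exp_nonneg T))
  have hlogT : Real.log n ≤ T := by
    rw [Real.log_le_iff_le_exp (by linarith)]
    exact hnT
  rw [ind_integral (hcont _) hlog0 hlogT, intervalIntegral.integral_mul_const,
    integral_exp_mul_complex hns]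
  field_simp
  ring

noncomputable def fterm (s : ℂ) (T : ℝ) (n : ℕ) : ℂ :=
  if n ∈ Finset.Icc 1 ⌊Real.exp T⌋₊ then
    ((Λ n / n : ℝ) : ℂ) * (Complex.exp (-s * Real.log n) - Complex.exp (-s * T)) else 0

lemma term_eq (s : ℂ) {n : ℕ} (hn : 1 ≤ n) :
    ((Λ n / n : ℝ) : ℂ) * Complex.exp (-s * Real.log n)
      = LSeries.term (fun n : ℕ => (Λ n : ℂ)) (s + 1) n := by
  have hn0 : (n : ℂ) ≠ 0 := Nat.cast_ne_zero.mpr (by omega)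
  have hnR : (0:ℝ) < n := by exact_mod_cast hn
  rw [LSeries.term, if_neg (by omega), Complex.cpow_def_of_ne_zero hn0]
  have hL : Complex.log (n : ℂ) = ((Real.log n : ℝ) : ℂ) := by
    rw [← Complex.natCast_log]
  rw [hL, show (((Real.log n : ℝ) : ℂ) * (s + 1)) = s * Real.log n + Real.log n by ring,
    Complex.exp_add]
  have hexp : Complex.exp ((Real.log n : ℝ) : ℂ) = (n : ℂ) := by
    rw [← Complex.ofReal_exp, Real.exp_log hnR]
    norm_cast
  rw [hexp, eq_div_iff (mul_ne_zero (Complex.exp_ne_zero _) hn0)]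
  push_cast
  rw [div_mul_eq_mul_div, div_mul_eq_mul_div, div_eq_iff hn0]
  have key : ∀ (a b u : ℂ), a * Complex.exp (-u) * (Complex.exp u * b) = a * b := by
    intro a b u
    rw [← mul_assoc, mul_assoc a, ← Complex.exp_add, neg_add_cancel, Complex.exp_zero,
      mul_one]
  rw [neg_mul]
  exact key _ _ _

lemma fterm_tendsto (s : ℂ) (hs : 0 < s.re) (n : ℕ) :
    Tendsto (fun T : ℝ => fterm s T n) atTop
      (nhds (LSeries.term (fun n : ℕ => (Λ n : ℂ)) (s + 1) n)) := by
  rcases Nat.eq_zero_or_pos n with rfl | hn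
  · simp only [fterm, Finset.mem_Icc, Nat.le_zero]
    simpa using tendsto_const_nhds (x := (0:ℂ)) (f := atTop (α := ℝ))
  · have hnR : (0:ℝ) < n := by exact_mod_cast hn
    have hlim : Tendsto (fun T : ℝ =>
        ((Λ n / n : ℝ) : ℂ) * (Complex.exp (-s * Real.log n) - Complex.exp (-s * T))) atTop
        (nhds (((Λ n / n : ℝ) : ℂ) * (Complex.exp (-s * Real.log n) - 0))) :=
      (tendsto_const_nhds.sub (cexp_decay hs)).const_mul _
    rw [sub_zero, term_eq s hn] at hlim
    apply hlim.congr'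
    filter_upwards [eventually_ge_atTop (Real.log n)] with T hT
    rw [fterm, if_pos]
    rw [Finset.mem_Icc]
    exact ⟨hn, Nat.le_floor ((Real.log_le_iff_le_exp hnR).mp hT)⟩

lemma fterm_bound (s : ℂ) (hs : 0 < s.re) :
    ∀ᶠ T : ℝ in atTop, ∀ n : ℕ, ‖fterm s T n‖ ≤ 2 * (Λ n / (n : ℝ) ^ (1 + s.re)) := by
  filter_upwards [eventually_ge_atTop (0:ℝ)] with T hT n
  have hbnn : 0 ≤ 2 * (Λ n / (n : ℝ) ^ (1 + s.re)) := by
    have := vonMangoldt_nonneg (n := n)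
    positivity
  rw [fterm]
  split_ifs with h
  · rw [Finset.mem_Icc] at h
    have hn1 : 1 ≤ n := h.1
    have hnR : (0:ℝ) < n := by exact_mod_cast hn1
    have hnT : (n : ℝ) ≤ Real.exp T :=
      le_trans (Nat.cast_le.mpr h.2) (Nat.floor_le (Real.exp_nonneg T))
    have hlogT : Real.log n ≤ T := (Real.log_le_iff_le_exp hnR).mpr hnT
    have hA : ‖Complex.exp (-s * (Real.log n : ℝ))‖ = Real.exp (-(s.re * Real.log n)) := by
      set L := Real.log (n : ℝ) with hLdef
      rw [Complex.norm_exp]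
      congr 1
      simp [Complex.neg_re, Complex.mul_re]
    have hB : ‖Complex.exp (-s * (T : ℝ))‖ = Real.exp (-(s.re * T)) := by
      rw [Complex.norm_exp]
      congr 1
      simp [Complex.neg_re, Complex.mul_re]
    have hBA : Real.exp (-(s.re * T)) ≤ Real.exp (-(s.re * Real.log n)) := by
      apply Real.exp_le_exp.mpr
      nlinarith [hs]
    have hpow : Real.exp (-(s.re * Real.log n)) = ((n : ℝ) ^ s.re)⁻¹ := by
      rw [← Real.rpow_neg (le_of_lt hnR), Real.rpow_def_of_pos hnR]
      ring_nf
    calc ‖((Λ n / n : ℝ) : ℂ) * (Complex.exp (-s * (Real.log n : ℝ)) - Complex.exp (-s * (T:ℝ)))‖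
        = (Λ n / n) * ‖Complex.exp (-s * (Real.log n : ℝ)) - Complex.exp (-s * (T:ℝ))‖ := by
          rw [norm_mul, Complex.norm_real, Real.norm_eq_abs,
            abs_of_nonneg (div_nonneg vonMangoldt_nonneg (le_of_lt hnR))]
      _ ≤ (Λ n / n) * (‖Complex.exp (-s * (Real.log n : ℝ))‖ + ‖Complex.exp (-s * (T:ℝ))‖) := by
          apply mul_le_mul_of_nonneg_left (norm_sub_le _ _)
            (div_nonneg vonMangoldt_nonneg (le_of_lt hnR))
      _ ≤ (Λ n / n) * (2 * ((n : ℝ) ^ s.re)⁻¹) := by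
          apply mul_le_mul_of_nonneg_left _ (div_nonneg vonMangoldt_nonneg (le_of_lt hnR))
          rw [hA, hB, ← hpow]
          linarith
      _ = 2 * (Λ n / (n : ℝ) ^ (1 + s.re)) := by
          rw [Real.rpow_add hnR, Real.rpow_one]
          have h1 : ((n:ℝ) ^ s.re) ≠ 0 := ne_of_gt (Real.rpow_pos_of_pos hnR _)
          field_simp
  · simpa using hbnn

lemma sum_tendsto (s : ℂ) (hs : 0 < s.re) :
    Tendsto (fun T : ℝ => ∑ n ∈ Finset.Icc 1 ⌊Real.exp T⌋₊,
        ((Λ n / n : ℝ) : ℂ) * (Complex.exp (-s * Real.log n) - Complex.exp (-s * T)))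
      atTop (nhds (LSeries (fun n : ℕ => (Λ n : ℂ)) (s + 1))) := by
  have key := tendsto_tsum_of_dominated_convergence (𝓕 := atTop)
    (f := fun T n => fterm s T n) (g := LSeries.term (fun n : ℕ => (Λ n : ℂ)) (s + 1))
    (bound := fun n => 2 * (Λ n / (n : ℝ) ^ (1 + s.re)))
    (vonMangoldt_div_summable hs) (fterm_tendsto s hs) (fterm_bound s hs)
  have heq : ∀ T : ℝ, ∑' n, fterm s T n = ∑ n ∈ Finset.Icc 1 ⌊Real.exp T⌋₊,
      ((Λ n / n : ℝ) : ℂ) * (Complex.exp (-s * Real.log n) - Complex.exp (-s * T)) := by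
    intro T
    rw [tsum_eq_sum (s := Finset.Icc 1 ⌊Real.exp T⌋₊)]
    · apply Finset.sum_congr rfl
      intro n hn
      rw [fterm, if_pos hn]
    · intro n hn
      rw [fterm, if_neg hn]
  rw [show LSeries (fun n : ℕ => (Λ n : ℂ)) (s + 1)
    = ∑' n, LSeries.term (fun n : ℕ => (Λ n : ℂ)) (s + 1) n from rfl]
  exact key.congr heq

lemma int_const (s : ℂ) (hs : s ≠ 0) (T : ℝ) :
    ∫ x in (0:ℝ)..T, Complex.exp (-s * x) = (1 - Complex.exp (-s * T)) / s := by
  rw [integral_exp_mul_complex (neg_ne_zero.mpr hs)]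
  have h0 : Complex.exp (-s * ((0:ℝ):ℂ)) = 1 := by simp
  rw [h0, div_eq_div_iff (neg_ne_zero.mpr hs) hs]
  ring

lemma int_x (s : ℂ) (hs : s ≠ 0) (T : ℝ) :
    ∫ x in (0:ℝ)..T, Complex.exp (-s * x) * (x : ℂ)
      = 1 / s ^ 2 - Complex.exp (-s * T) * ((T : ℂ) / s + 1 / s ^ 2) := by
  have hder : ∀ x : ℝ, HasDerivAt (fun y : ℝ => -(Complex.exp (-s * y) * ((y:ℂ) / s + 1 / s ^ 2)))
      (Complex.exp (-s * x) * (x : ℂ)) x := by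
    intro x
    have hexp : HasDerivAt (fun z : ℂ => Complex.exp (-s * z)) (Complex.exp (-s * x) * (-s))
        (x : ℂ) := by
      simpa using (((hasDerivAt_id ((x:ℝ):ℂ)).const_mul (-s)).cexp)
    have hlin : HasDerivAt (fun z : ℂ => z / s + 1 / s ^ 2) (1 / s) (x : ℂ) :=
      ((hasDerivAt_id ((x:ℝ):ℂ)).div_const s).add_const (1 / s ^ 2)
    have h := ((hexp.mul hlin).neg).comp_ofReal
    convert h using 1
    · rfl
    field_simp
    ring
  rw [intervalIntegral.integral_eq_sub_of_hasDerivAt (fun x _ => hder x)]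
  · simp only [Complex.ofReal_zero, mul_zero, Complex.exp_zero, zero_div, zero_add, one_mul]
    ring
  · apply Continuous.intervalIntegrable
    exact (Complex.continuous_exp.comp (by continuity)).mul Complex.continuous_ofReal

theorem stmt19 :
    MonotoneOn (fun x : ℝ => Sfun x + x) (Set.Ici 0) ∧
    ∀ s : ℂ, 0 < s.re →
      Tendsto (fun T : ℝ => ∫ x in (0:ℝ)..T, Complex.exp (-s * x) * (Sfun x : ℂ))
        atTop
        (nhds (-(deriv riemannZeta (s + 1)) / (s * riemannZeta (s + 1))
          - 1 / s ^ 2 + (Real.eulerMascheroniConstant : ℂ) / s)) := by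
  refine ⟨mono_part, ?_⟩
  intro s hs
  have hs0 : s ≠ 0 := by
    intro h
    rw [h] at hs
    simp at hs
  have hre1 : 1 < (s + 1).re := by
    simp only [Complex.add_re, Complex.one_re]
    linarith
  have hzeta : riemannZeta (s + 1) ≠ 0 := riemannZeta_ne_zero_of_one_lt_re hre1
  set γ : ℝ := Real.eulerMascheroniConstant with hγdef
  -- the limiting function
  have hE : Tendsto (fun T : ℝ => Complex.exp (-s * T) * ((T : ℂ) / s + 1 / s ^ 2)) atTop
      (nhds 0) := by
    have h := ((cexp_mul_decay hs).mul_const (1/s)).add ((cexp_decay hs).mul_const (1/s^2))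
    rw [zero_mul, zero_add, zero_mul] at h
    apply h.congr
    intro T
    ring
  have hF : Tendsto (fun T : ℝ => (∑ n ∈ Finset.Icc 1 ⌊Real.exp T⌋₊,
      ((Λ n / n : ℝ) : ℂ) * (Complex.exp (-s * Real.log n) - Complex.exp (-s * T))) / s
      - (1 / s ^ 2 - Complex.exp (-s * T) * ((T : ℂ) / s + 1 / s ^ 2))
      + (γ : ℂ) * ((1 - Complex.exp (-s * T)) / s)) atTop
      (nhds (LSeries (fun n : ℕ => (Λ n : ℂ)) (s + 1) / s - (1 / s ^ 2 - 0)
        + (γ : ℂ) * ((1 - 0) / s))) := by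
    refine (((sum_tendsto s hs).div_const s).sub (tendsto_const_nhds.sub hE)).add ?_
    exact tendsto_const_nhds.mul ((tendsto_const_nhds.sub (cexp_decay hs)).div_const s)
  have hval : LSeries (fun n : ℕ => (Λ n : ℂ)) (s + 1) / s - (1 / s ^ 2 - 0)
      + (γ : ℂ) * ((1 - 0) / s)
      = -(deriv riemannZeta (s + 1)) / (s * riemannZeta (s + 1)) - 1 / s ^ 2 + (γ : ℂ) / s := by
    rw [LSeries_vonMangoldt_eq_deriv_riemannZeta_div hre1]
    field_simp
    ring
  rw [hval] at hF
  apply hF.congr'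
  filter_upwards [eventually_ge_atTop (0:ℝ)] with T hT
  -- rewrite integral
  have hcont1 : Continuous (fun x : ℝ => Complex.exp (-s * x) * ((γ : ℝ) : ℂ)) :=
    (Complex.continuous_exp.comp (by continuity)).mul continuous_const
  have hcont2 : Continuous (fun x : ℝ => Complex.exp (-s * x) * (x : ℂ)) :=
    (Complex.continuous_exp.comp (by continuity)).mul Complex.continuous_ofReal
  have split : (∫ x in (0:ℝ)..T, Complex.exp (-s * x) * (Sfun x : ℂ))
      = (∫ x in (0:ℝ)..T, Complex.exp (-s * x) * (chebyshevPsi1 (Real.exp x) : ℂ))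
        + ((∫ x in (0:ℝ)..T, Complex.exp (-s * x) * ((γ : ℝ) : ℂ))
          - ∫ x in (0:ℝ)..T, Complex.exp (-s * x) * (x : ℂ)) := by
    rw [← intervalIntegral.integral_sub (hcont1.intervalIntegrable 0 T)
      (hcont2.intervalIntegrable 0 T),
      ← intervalIntegral.integral_add (g := fun x : ℝ => Complex.exp (-s * x) * ((γ : ℝ) : ℂ) - Complex.exp (-s * x) * (x : ℂ)) (psi1_intervalIntegrable s hT)
      ((hcont1.sub hcont2).intervalIntegrable 0 T)]
    apply intervalIntegral.integral_congr
    intro x _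
    simp only [Sfun, hγdef]
    push_cast
    ring
  rw [split, psi1_integral s hs0 T hT, int_x s hs0 T, intervalIntegral.integral_mul_const,
    int_const s hs0 T]
  ring
end
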